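/- Let k ≥ 2, let d ∈ {2k, 2k+1}, and let P be a simplicial d-polytope with vertex set V of cardinality n ≥ d + 2 such that P is neighborly (⌊d/2⌋-neighborly, i.e., k-neighborly). Then for every vertex v ∈ V, the link lk(v, ∂P) has a missing face of cardinality at least k + 1 (equivalently, of dimension at least k). Consequently, if a neighborly (d−1)-sphere has a vertex whose link has all missing faces of dimension k − 1, then that sphere is not combinatorially equivalent to the boundary complex of any simplicial polytope. -/

import Mathlib

open scoped Classical

/-- A simplicial `d`-polytope, given by its vertex set `verts`, a finite set of points affinely
spanning `ℝ^d` such that no vertex lies in the convex hull of the remaining vertices and the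
vertex set of every proper face (cut out by a supporting linear functional) is affinely
independent. -/
structure SimplicialPolytope (d : ℕ) where
  verts : Finset (EuclideanSpace ℝ (Fin d))
  span_top : affineSpan ℝ (verts : Set (EuclideanSpace ℝ (Fin d))) = ⊤
  extremal : ∀ v ∈ verts,
    v ∉ convexHull ℝ ((verts : Set (EuclideanSpace ℝ (Fin d))) \ {v})
  simplicial : ∀ (ℓ : EuclideanSpace ℝ (Fin d) →ₗ[ℝ] ℝ) (c : ℝ),
    (∀ x ∈ convexHull ℝ (verts : Set (EuclideanSpace ℝ (Fin d))), ℓ x ≤ c) →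
    {x ∈ convexHull ℝ (verts : Set (EuclideanSpace ℝ (Fin d))) | ℓ x = c} ≠
      convexHull ℝ (verts : Set (EuclideanSpace ℝ (Fin d))) →
    AffineIndependent ℝ
      ((↑) : {x : EuclideanSpace ℝ (Fin d) // x ∈ verts ∧ ℓ x = c} → EuclideanSpace ℝ (Fin d))

namespace SimplicialPolytope

variable {d : ℕ}

/-- The underlying polytope `P = conv(verts)`. -/
def body (P : SimplicialPolytope d) : Set (EuclideanSpace ℝ (Fin d)) :=
  convexHull ℝ (P.verts : Set (EuclideanSpace ℝ (Fin d)))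

/-- `F` is a face of the boundary complex `∂P`: either `F = ∅` or `F` is the set of vertices
lying on a nonempty proper face of `P` cut out by a supporting linear functional. -/
def IsBdryFace (P : SimplicialPolytope d) (F : Finset (EuclideanSpace ℝ (Fin d))) : Prop :=
  F = ∅ ∨ ∃ (ℓ : EuclideanSpace ℝ (Fin d) →ₗ[ℝ] ℝ) (c : ℝ),
    (∀ x ∈ P.body, ℓ x ≤ c) ∧
    {x ∈ P.body | ℓ x = c}.Nonempty ∧
    {x ∈ P.body | ℓ x = c} ≠ P.body ∧
    (F : Set (EuclideanSpace ℝ (Fin d))) = {x ∈ (P.verts : Set (EuclideanSpace ℝ (Fin d))) | ℓ x = c}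

/-- A missing face of `∂P`: a subset of the vertex set which is not a face of `∂P` but all of
whose proper subsets are faces of `∂P`. -/
def IsMissing (P : SimplicialPolytope d) (F : Finset (EuclideanSpace ℝ (Fin d))) : Prop :=
  F ⊆ P.verts ∧ ¬ P.IsBdryFace F ∧ ∀ G ⊂ F, P.IsBdryFace G

/-- `m_i(∂P)`: the number of missing faces of `∂P` of cardinality `i + 1`. -/
noncomputable def mNum (P : SimplicialPolytope d) (i : ℕ) : ℕ :=
  {F : Finset (EuclideanSpace ℝ (Fin d)) | P.IsMissing F ∧ F.card = i + 1}.ncard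

/-- `P` is `j`-neighborly: every `j`-element subset of the vertex set is a face of `∂P`. -/
def Neighborly (P : SimplicialPolytope d) (j : ℕ) : Prop :=
  ∀ F : Finset (EuclideanSpace ℝ (Fin d)), F ⊆ P.verts → F.card = j → P.IsBdryFace F

/-- `G` is a face of the link of the vertex `v` in `∂P`. -/
def IsLinkFace (P : SimplicialPolytope d) (v : EuclideanSpace ℝ (Fin d))
    (G : Finset (EuclideanSpace ℝ (Fin d))) : Prop :=
  v ∉ G ∧ P.IsBdryFace (insert v G)

/-- A missing face of the link of the vertex `v` in `∂P`: a subset of `verts ∖ {v}` which is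
not a face of the link but all of whose proper subsets are faces of the link. -/
def IsLinkMissing (P : SimplicialPolytope d) (v : EuclideanSpace ℝ (Fin d))
    (F : Finset (EuclideanSpace ℝ (Fin d))) : Prop :=
  F ⊆ P.verts.erase v ∧ ¬ P.IsLinkFace v F ∧ ∀ G ⊂ F, P.IsLinkFace v G

/-- `m_i(lk(v, ∂P))`: the number of missing faces of the link of `v` of cardinality `i + 1`. -/
noncomputable def mLink (P : SimplicialPolytope d) (v : EuclideanSpace ℝ (Fin d)) (i : ℕ) : ℕ :=
  {F : Finset (EuclideanSpace ℝ (Fin d)) | P.IsLinkMissing v F ∧ F.card = i + 1}.ncard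

end SimplicialPolytope

noncomputable section AuxStatement14

variable {d : ℕ}

local notation "E" => EuclideanSpace ℝ (Fin d)

/-- Extract affine-combination weights from membership in the affine span of a finite set. -/
lemma st14_affmem (F : Finset E) {x : E} (hx : x ∈ affineSpan ℝ (F : Set E)) :
    ∃ w : E → ℝ, ∑ y ∈ F, w y = 1 ∧ ∑ y ∈ F, w y • y = x := by
  have hrange : Set.range ((↑) : {y // y ∈ (F : Set E)} → E) = (F : Set E) := Subtype.range_coe
  rw [← hrange] at hx
  obtain ⟨s, w, hw, hxc⟩ := eq_affineCombination_of_mem_affineSpan hx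
  rw [Finset.affineCombination_eq_linear_combination _ _ _ hw] at hxc
  have hmaps : ∀ i ∈ s, (i : E) ∈ F := fun i _ => i.2
  refine ⟨fun y => ∑ i ∈ s.filter (fun i : {y // y ∈ (F : Set E)} => (i : E) = y), w i, ?_, ?_⟩
  · rw [Finset.sum_fiberwise_of_maps_to hmaps]
    exact hw
  · have hpt : ∀ y ∈ F, (∑ i ∈ s.filter (fun i : {y // y ∈ (F : Set E)} => (i : E) = y), w i) • y
        = ∑ i ∈ s.filter (fun i : {y // y ∈ (F : Set E)} => (i : E) = y), w i • (i : E) := by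
      intro y _
      rw [Finset.sum_smul]
      refine Finset.sum_congr rfl ?_
      intro i hi
      rw [(Finset.mem_filter.mp hi).2]
    rw [Finset.sum_congr rfl hpt, Finset.sum_fiberwise_of_maps_to hmaps]
    exact hxc.symm

/-- Extract convex-combination weights from membership in the convex hull of a finite set. -/
lemma st14_convmem (G : Finset E) {x : E} (hx : x ∈ convexHull ℝ (G : Set E)) :
    ∃ w : E → ℝ, (∀ y ∈ G, 0 ≤ w y) ∧ ∑ y ∈ G, w y = 1 ∧ ∑ y ∈ G, w y • y = x := by
  rw [Finset.convexHull_eq] at hx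
  obtain ⟨w, h0, h1, hc⟩ := hx
  refine ⟨w, h0, h1, ?_⟩
  rw [← hc, Finset.centerMass_eq_of_sum_1 _ _ h1]
  rfl

/-- A linear functional which is constant on a set and exceeds that constant at a point
outside the affine span of the set. -/
lemma st14_vanishing (S : Set E) (hne : S.Nonempty) {t : E} (ht : t ∉ affineSpan ℝ S) :
    ∃ (φ : E →ₗ[ℝ] ℝ) (c₀ : ℝ), (∀ s ∈ S, φ s = c₀) ∧ c₀ < φ t := by
  obtain ⟨s₀, hs₀⟩ := hne
  set dir := (affineSpan ℝ S).direction with hdir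
  set b : E := (t - s₀) - (dir.orthogonalProjectionOnto (t - s₀) : E) with hb
  have hbo : b ∈ dirᗮ := Submodule.sub_starProjection_mem_orthogonal _
  have hbne : b ≠ 0 := by
    intro h
    apply ht
    have hmem : t - s₀ ∈ dir := by
      have h2 : t - s₀ = (dir.orthogonalProjectionOnto (t - s₀) : E) := sub_eq_zero.mp h
      rw [h2]; exact Submodule.coe_mem _
    have := AffineSubspace.vadd_mem_of_mem_direction hmem (subset_affineSpan ℝ S hs₀)
    simpa using this
  refine ⟨(innerSL ℝ b).toLinearMap, inner ℝ b s₀, ?_, ?_⟩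
  · intro s hs
    have hmem : s - s₀ ∈ dir :=
      AffineSubspace.vsub_mem_direction (subset_affineSpan ℝ S hs) (subset_affineSpan ℝ S hs₀)
    have h1 : (inner ℝ b (s - s₀) : ℝ) = 0 := by
      rw [real_inner_comm]
      exact (Submodule.mem_orthogonal dir b).mp hbo _ hmem
    have h2 : (inner ℝ b s : ℝ) - inner ℝ b s₀ = 0 := by
      rw [← inner_sub_right]; exact h1
    have h3 : ((innerSL ℝ b).toLinearMap) s = inner ℝ b s := rfl
    rw [h3]; linarith
  · have hproj : (inner ℝ b ((dir.orthogonalProjectionOnto (t - s₀) : E)) : ℝ) = 0 := by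
      rw [real_inner_comm]
      exact (Submodule.mem_orthogonal dir b).mp hbo _ (Submodule.coe_mem _)
    have hdecomp : t - s₀ = b + (dir.orthogonalProjectionOnto (t - s₀) : E) := by
      rw [hb]; abel
    have h1 : (inner ℝ b (t - s₀) : ℝ) = inner ℝ b b := by
      rw [hdecomp, inner_add_right, hproj, add_zero]
    have h2 : (inner ℝ b t : ℝ) - inner ℝ b s₀ = inner ℝ b b := by
      rw [← inner_sub_right]; exact h1
    have h3 : (0:ℝ) < inner ℝ b b := by
      rw [real_inner_self_eq_norm_sq]
      exact pow_pos (norm_pos_iff.mpr hbne) 2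
    have h4 : ((innerSL ℝ b).toLinearMap) t = inner ℝ b t := rfl
    rw [h4]; linarith



lemma st14_supp_hull (P : SimplicialPolytope d) (ℓ : E →ₗ[ℝ] ℝ) (c : ℝ)
    (h : ∀ u ∈ P.verts, ℓ u ≤ c) : ∀ x ∈ P.body, ℓ x ≤ c := by
  intro x hx
  have hsub : (P.verts : Set E) ⊆ {w : E | ℓ w ≤ c} := fun u hu => h u (Finset.mem_coe.mp hu)
  exact convexHull_min hsub (convex_halfSpace_le ℓ.isLinear c) hx

lemma st14_vert_mem_body (P : SimplicialPolytope d) {u : E} (hu : u ∈ P.verts) : u ∈ P.body :=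
  subset_convexHull ℝ _ (Finset.mem_coe.mpr hu)

/-- Every nonempty subset of the vertex set of cardinality at most `k` is exposed by a
supporting functional which is strictly smaller on all other vertices. -/
lemma st14_exists_face_cert (P : SimplicialPolytope d) (k : ℕ) (hngh : P.Neighborly k)
    (hbig : k < P.verts.card) :
    ∀ (S : Finset E), S ⊆ P.verts → S.Nonempty → S.card ≤ k →
    ∃ (ℓ : E →ₗ[ℝ] ℝ) (c : ℝ), (∀ u ∈ P.verts, ℓ u ≤ c) ∧
      (∀ u ∈ S, ℓ u = c) ∧ (∀ u ∈ P.verts, u ∉ S → ℓ u < c) := by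
  suffices H : ∀ (j : ℕ) (S : Finset E), S ⊆ P.verts → S.Nonempty → S.card + j = k →
      ∃ (ℓ : E →ₗ[ℝ] ℝ) (c : ℝ), (∀ u ∈ P.verts, ℓ u ≤ c) ∧
      (∀ u ∈ S, ℓ u = c) ∧ (∀ u ∈ P.verts, u ∉ S → ℓ u < c) by
    intro S hS hne hcard
    exact H (k - S.card) S hS hne (by omega)
  intro j
  induction j with
  | zero =>
    intro S hS hne hcard
    have hc : S.card = k := by omega
    have hbf := hngh S hS hc
    rcases hbf with h0 | ⟨ℓ, c, hsupp, _, _, hset⟩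
    · exact absurd h0 (Finset.nonempty_iff_ne_empty.mp hne)
    have hmem : ∀ y : E, y ∈ (S : Set E) ↔ y ∈ P.verts ∧ ℓ y = c := by
      intro y
      rw [Set.ext_iff.mp hset y]
      exact Iff.rfl
    refine ⟨ℓ, c, fun u hu => hsupp u (st14_vert_mem_body P hu), ?_, ?_⟩
    · intro u hu
      exact ((hmem u).mp (Finset.mem_coe.mpr hu)).2
    · intro u hu hus
      have h1 : ℓ u ≤ c := hsupp u (st14_vert_mem_body P hu)
      have h2 : ℓ u ≠ c := fun he => hus (Finset.mem_coe.mp ((hmem u).mpr ⟨hu, he⟩))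
      exact lt_of_le_of_ne h1 h2
  | succ j ih =>
    intro S hS hne hcard
    have hV : ¬ P.verts ⊆ S := fun hsub => by
      have := Finset.card_le_card hsub; omega
    obtain ⟨u, hu⟩ := Finset.sdiff_nonempty.mpr hV
    have huV : u ∈ P.verts := (Finset.mem_sdiff.mp hu).1
    have huS : u ∉ S := (Finset.mem_sdiff.mp hu).2
    have hS'sub : insert u S ⊆ P.verts := Finset.insert_subset huV hS
    have hS'card : (insert u S).card + j = k := by
      rw [Finset.card_insert_of_notMem huS]; omega
    obtain ⟨ℓ', c', hsupp', heq', hlt'⟩ := ih (insert u S) hS'sub (Finset.insert_nonempty u S) hS'card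
    have hV2 : ¬ P.verts ⊆ insert u S := fun hsub => by
      have h1 := Finset.card_le_card hsub
      have h2 := Finset.card_insert_le u S
      omega
    have hne2 : (P.verts \ insert u S).Nonempty := Finset.sdiff_nonempty.mpr hV2
    -- affine independence of insert u S
    have hAI : AffineIndependent ℝ ((↑) : {x : E // x ∈ P.verts ∧ ℓ' x = c'} → E) := by
      apply P.simplicial ℓ' c' (st14_supp_hull P ℓ' c' hsupp')
      obtain ⟨u₂, hu₂⟩ := hne2
      have hu₂V : u₂ ∈ P.verts := (Finset.mem_sdiff.mp hu₂).1
      have hu₂lt : ℓ' u₂ < c' := hlt' u₂ hu₂V (Finset.mem_sdiff.mp hu₂).2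
      intro heqbody
      have h5 : u₂ ∈ convexHull ℝ (P.verts : Set E) := st14_vert_mem_body P hu₂V
      rw [← heqbody] at h5
      exact absurd h5.2 (ne_of_lt hu₂lt)
    -- u is not in the affine span of S
    have hnotspan : u ∉ affineSpan ℝ (S : Set E) := by
      intro hin
      set ι := {x : E // x ∈ P.verts ∧ ℓ' x = c'}
      have hiu : u ∈ P.verts ∧ ℓ' u = c' := ⟨huV, heq' u (Finset.mem_insert_self u S)⟩
      set iu : ι := ⟨u, hiu⟩
      set s : Set ι := {i : ι | (i : E) ∈ S} with hs
      have himage : (S : Set E) ⊆ (↑) '' (s \ {iu}) := by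
        intro y hy
        have hyS : y ∈ S := Finset.mem_coe.mp hy
        have hiy : y ∈ P.verts ∧ ℓ' y = c' :=
          ⟨hS hyS, heq' y (Finset.mem_insert_of_mem hyS)⟩
        refine ⟨⟨y, hiy⟩, ⟨hyS, ?_⟩, rfl⟩
        intro hcontra
        rw [Set.mem_singleton_iff] at hcontra
        have : y = u := congrArg Subtype.val hcontra
        exact huS (this ▸ hyS)
      have hle := affineSpan_mono ℝ himage
      have := hAI.notMem_affineSpan_diff iu s
      exact this (hle hin)
    obtain ⟨φ, c₀, hφ, hφu⟩ := st14_vanishing (S : Set E) (by exact_mod_cast hne) hnotspan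
    -- assemble the perturbed functional
    obtain ⟨xδ, hxδ, hδmin⟩ := Finset.exists_min_image (P.verts \ insert u S) (fun x => c' - ℓ' x) hne2
    set δ := c' - ℓ' xδ with hδ
    have hδpos : 0 < δ := by
      have := hlt' xδ (Finset.mem_sdiff.mp hxδ).1 (Finset.mem_sdiff.mp hxδ).2
      simp only [hδ]; linarith
    obtain ⟨xM, _, hMmax⟩ := Finset.exists_max_image P.verts (fun x => c₀ - φ x) ⟨u, huV⟩
    set M := max (c₀ - φ xM) 1 with hM
    have hMone : (1:ℝ) ≤ M := le_max_right _ _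
    have hMpos : 0 < M := lt_of_lt_of_le zero_lt_one hMone
    set ε := δ / (2 * M) with hε
    have hεpos : 0 < ε := div_pos hδpos (by linarith)
    have hεM : ε * M = δ / 2 := by
      rw [hε]; field_simp
    have hbound : ∀ x ∈ P.verts, ε * (c₀ - φ x) ≤ δ / 2 := by
      intro x hx
      have h1 : c₀ - φ x ≤ M := le_trans (hMmax x hx) (le_max_left _ _)
      calc ε * (c₀ - φ x) ≤ ε * M := by
            exact mul_le_mul_of_nonneg_left h1 (le_of_lt hεpos)
        _ = δ / 2 := hεM
    have heval : ∀ x : E, (ℓ' + ε • (-φ)) x = ℓ' x + ε * (c₀ - φ x) - ε * c₀ := by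
      intro x
      simp [LinearMap.add_apply, LinearMap.smul_apply, LinearMap.neg_apply, smul_eq_mul]
      ring
    have hkey1 : ∀ x ∈ S, ℓ' x + ε * (c₀ - φ x) - ε * c₀ = c' - ε * c₀ := by
      intro x hx
      have h1 : ℓ' x = c' := heq' x (Finset.mem_insert_of_mem hx)
      have h2 : φ x = c₀ := hφ x (Finset.mem_coe.mpr hx)
      rw [h1, h2]; ring
    have hkey2 : ∀ x ∈ P.verts, x ∉ S → ℓ' x + ε * (c₀ - φ x) - ε * c₀ < c' - ε * c₀ := by
      intro x hx hxS
      by_cases hxu : x = u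
      · subst hxu
        have h1 : ℓ' x = c' := heq' x (Finset.mem_insert_self x S)
        rw [h1]
        have h2 : c₀ - φ x < 0 := by linarith
        nlinarith
      · have hxS' : x ∉ insert u S := by
          intro hmem
          rcases Finset.mem_insert.mp hmem with h | h
          · exact hxu h
          · exact hxS h
        have h1 : ℓ' x < c' := hlt' x hx hxS'
        have h2 : δ ≤ c' - ℓ' x := by
          have := hδmin x (Finset.mem_sdiff.mpr ⟨hx, hxS'⟩)
          simpa [hδ] using this
        have h3 := hbound x hx
        linarith
    refine ⟨ℓ' + ε • (-φ), c' - ε * c₀, ?_, ?_, ?_⟩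
    · intro x hx
      rw [heval x]
      by_cases h : x ∈ S
      · exact le_of_eq (hkey1 x h)
      · exact le_of_lt (hkey2 x hx h)
    · intro x hx
      rw [heval x]
      exact hkey1 x hx
    · intro x hx hxS
      rw [heval x]
      exact hkey2 x hx hxS

lemma st14_split_cross (P : SimplicialPolytope d) (k : ℕ) (hngh : P.Neighborly k)
    (hbig : k < P.verts.card) (N Γ : Finset E) (hN : N ⊆ P.verts) (hΓ : Γ ⊆ P.verts)
    (hdisj : Disjoint N Γ) (hNk : N.card ≤ k) (μ ν : E → ℝ)
    (hν : ∀ g ∈ Γ, 0 ≤ ν g) (hmass : ∑ y ∈ N, μ y = ∑ y ∈ Γ, ν y)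
    (hpos : 0 < ∑ y ∈ N, μ y)
    (heq : ∑ y ∈ N, μ y • y = ∑ y ∈ Γ, ν y • y) : False := by
  set Pp := N.filter (fun y => 0 < μ y) with hPp
  have hPpne : Pp.Nonempty := by
    by_contra h
    rw [Finset.not_nonempty_iff_eq_empty] at h
    have hall : ∀ y ∈ N, μ y ≤ 0 := by
      intro y hy
      by_contra hc
      have hmem : y ∈ Pp := Finset.mem_filter.mpr ⟨hy, lt_of_not_ge hc⟩
      rw [h] at hmem; exact absurd hmem (Finset.notMem_empty y)
    have := Finset.sum_nonpos hall
    linarith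
  obtain ⟨ℓ₂, c₂, hsupp₂, heq₂, hlt₂⟩ := st14_exists_face_cert P k hngh hbig Pp
    (fun y hy => hN (Finset.mem_filter.mp hy).1) hPpne
    (le_trans (Finset.card_filter_le _ _) hNk)
  set Nn := N.filter (fun y => ¬ 0 < μ y) with hNn
  have hsplit1 : ∑ y ∈ Pp, μ y + ∑ y ∈ Nn, μ y = ∑ y ∈ N, μ y :=
    Finset.sum_filter_add_sum_filter_not N _ _
  have hsplit2 : ∑ y ∈ Pp, μ y • y + ∑ y ∈ Nn, μ y • y = ∑ y ∈ N, μ y • y :=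
    Finset.sum_filter_add_sum_filter_not N _ _
  set Δ := Γ ∪ Nn with hΔ
  have hdisjΓNn : Disjoint Γ Nn :=
    Disjoint.mono_right (Finset.filter_subset _ _) hdisj.symm
  set ρ : E → ℝ := fun y => if y ∈ Γ then ν y else -μ y with hρ
  have hρΓ : ∀ y ∈ Γ, ρ y = ν y := fun y hy => if_pos hy
  have hρNn : ∀ y ∈ Nn, ρ y = -μ y :=
    fun y hy => if_neg (Finset.disjoint_right.mp hdisjΓNn hy)
  have hρsum : ∑ y ∈ Δ, ρ y = ∑ y ∈ Pp, μ y := by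
    rw [hΔ, Finset.sum_union hdisjΓNn, Finset.sum_congr rfl hρΓ, Finset.sum_congr rfl hρNn,
      Finset.sum_neg_distrib]
    linarith
  have hρvec : ∑ y ∈ Δ, ρ y • y = ∑ y ∈ Pp, μ y • y := by
    rw [hΔ, Finset.sum_union hdisjΓNn]
    have h1 : ∑ y ∈ Γ, ρ y • y = ∑ y ∈ Γ, ν y • y :=
      Finset.sum_congr rfl (fun y hy => by rw [hρΓ y hy])
    have h2 : ∑ y ∈ Nn, ρ y • y = - ∑ y ∈ Nn, μ y • y := by
      rw [← Finset.sum_neg_distrib]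
      exact Finset.sum_congr rfl (fun y hy => by rw [hρNn y hy, neg_smul])
    rw [h1, h2, ← heq, ← hsplit2]
    abel
  -- properties of Δ
  have hΔverts : ∀ y ∈ Δ, y ∈ P.verts := by
    intro y hy
    rcases Finset.mem_union.mp hy with h | h
    · exact hΓ h
    · exact hN (Finset.mem_filter.mp h).1
  have hΔnotPp : ∀ y ∈ Δ, y ∉ Pp := by
    intro y hy hyPp
    rcases Finset.mem_union.mp hy with h | h
    · exact Finset.disjoint_left.mp hdisj (Finset.mem_filter.mp hyPp).1 h
    · exact (Finset.mem_filter.mp h).2 (Finset.mem_filter.mp hyPp).2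
  have hρnonneg : ∀ y ∈ Δ, 0 ≤ ρ y := by
    intro y hy
    rcases Finset.mem_union.mp hy with h | h
    · rw [hρΓ y h]; exact hν y h
    · rw [hρNn y h]
      have := (Finset.mem_filter.mp h).2
      linarith [le_of_not_gt this]
  -- apply ℓ₂
  have hLHS : ℓ₂ (∑ y ∈ Pp, μ y • y) = (∑ y ∈ Pp, μ y) * c₂ := by
    rw [map_sum, Finset.sum_mul]
    refine Finset.sum_congr rfl ?_
    intro y hy
    rw [ℓ₂.map_smul, smul_eq_mul, heq₂ y hy]
  have hRHS : ℓ₂ (∑ y ∈ Δ, ρ y • y) = ∑ y ∈ Δ, ρ y * ℓ₂ y := by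
    rw [map_sum]
    exact Finset.sum_congr rfl (fun y _ => by rw [ℓ₂.map_smul, smul_eq_mul])
  have hPppos : 0 < ∑ y ∈ Pp, μ y :=
    Finset.sum_pos (fun y hy => (Finset.mem_filter.mp hy).2) hPpne
  have hposΔ : ∃ y ∈ Δ, 0 < ρ y := by
    by_contra h
    push_neg at h
    have hsum := Finset.sum_nonpos h
    rw [hρsum] at hsum
    linarith
  obtain ⟨y₀, hy₀, hy₀pos⟩ := hposΔ
  have hstrict : ∑ y ∈ Δ, ρ y * ℓ₂ y < ∑ y ∈ Δ, ρ y * c₂ := by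
    apply Finset.sum_lt_sum
    · intro i hi
      exact mul_le_mul_of_nonneg_left (hsupp₂ i (hΔverts i hi)) (hρnonneg i hi)
    · exact ⟨y₀, hy₀, mul_lt_mul_of_pos_left (hlt₂ y₀ (hΔverts y₀ hy₀) (hΔnotPp y₀ hy₀)) hy₀pos⟩
  have hfinal : (∑ y ∈ Pp, μ y) * c₂ < (∑ y ∈ Pp, μ y) * c₂ := by
    calc (∑ y ∈ Pp, μ y) * c₂ = ℓ₂ (∑ y ∈ Pp, μ y • y) := hLHS.symm
      _ = ℓ₂ (∑ y ∈ Δ, ρ y • y) := by rw [hρvec]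
      _ = ∑ y ∈ Δ, ρ y * ℓ₂ y := hRHS
      _ < ∑ y ∈ Δ, ρ y * c₂ := hstrict
      _ = (∑ y ∈ Δ, ρ y) * c₂ := (Finset.sum_mul _ _ _).symm
      _ = (∑ y ∈ Pp, μ y) * c₂ := by rw [hρsum]
  exact absurd hfinal (lt_irrefl _)

lemma st14_isBdryFace_of_cert (P : SimplicialPolytope d) (S : Finset E)
    (hS : S ⊆ P.verts) (hproper : ∃ u ∈ P.verts, u ∉ S) (hne : S.Nonempty)
    (ℓ : E →ₗ[ℝ] ℝ) (c : ℝ) (hsupp : ∀ u ∈ P.verts, ℓ u ≤ c)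
    (heqS : ∀ u ∈ S, ℓ u = c) (hlt : ∀ u ∈ P.verts, u ∉ S → ℓ u < c) :
    P.IsBdryFace S := by
  right
  obtain ⟨u₀, hu₀V, hu₀S⟩ := hproper
  obtain ⟨s₀, hs₀⟩ := hne
  refine ⟨ℓ, c, st14_supp_hull P ℓ c hsupp,
    ⟨s₀, st14_vert_mem_body P (hS hs₀), heqS s₀ hs₀⟩, ?_, ?_⟩
  · intro heqbody
    have h5 : u₀ ∈ P.body := st14_vert_mem_body P hu₀V
    rw [← heqbody] at h5
    exact absurd h5.2 (ne_of_lt (hlt u₀ hu₀V hu₀S))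
  · ext x
    constructor
    · intro hx
      have hxS : x ∈ S := Finset.mem_coe.mp hx
      exact ⟨Finset.mem_coe.mpr (hS hxS), heqS x hxS⟩
    · rintro ⟨hxV, hxc⟩
      by_contra hxS
      have hxS' : x ∉ S := fun h => hxS (Finset.mem_coe.mpr h)
      exact absurd hxc (ne_of_lt (hlt x (Finset.mem_coe.mp hxV) hxS'))

lemma st14_hyperplane (ℓ₁ : E →ₗ[ℝ] ℝ) (c₁ : ℝ) :
    ∃ H : AffineSubspace ℝ E, (H : Set E) = {x : E | ℓ₁ x = c₁} := by
  refine ⟨⟨{x : E | ℓ₁ x = c₁}, ?_⟩, rfl⟩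
  intro r p₁ p₂ p₃ hp₁ hp₂ hp₃
  simp only [Set.mem_setOf_eq] at *
  have heval : ℓ₁ (r • (p₁ -ᵥ p₂) +ᵥ p₃) = r * (ℓ₁ p₁ - ℓ₁ p₂) + ℓ₁ p₃ := by
    have h0 : r • (p₁ -ᵥ p₂) +ᵥ p₃ = r • (p₁ - p₂) + p₃ := rfl
    rw [h0, map_add, map_smul, map_sub, smul_eq_mul]
  rw [heval, hp₁, hp₂, hp₃]
  ring

lemma st14_exists_visible (P : SimplicialPolytope d) {v : E} (hv : v ∈ P.verts)
    (hW : (P.verts.erase v).Nonempty) :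
    ∃ (ℓ : E →ₗ[ℝ] ℝ) (c : ℝ), (∀ u ∈ P.verts.erase v, ℓ u ≤ c) ∧ c < ℓ v ∧
      ¬ P.IsBdryFace (insert v ((P.verts.erase v).filter (fun u => ℓ u = c))) := by
  set W := P.verts.erase v with hWdef
  have hvout : v ∉ convexHull ℝ (W : Set E) := by
    rw [hWdef, Finset.coe_erase]
    exact P.extremal v hv
  have hconv : Convex ℝ (convexHull ℝ (W : Set E)) := convex_convexHull ℝ _
  have hclosed : IsClosed (convexHull ℝ (W : Set E)) := (W.finite_toSet).isClosed_convexHull ℝ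
  obtain ⟨f, u₁, hfW, hfv⟩ := geometric_hahn_banach_closed_point hconv hclosed hvout
  set 𝒮 := W.powerset.filter (fun T => ∃ (ℓ : E →ₗ[ℝ] ℝ) (c : ℝ),
    (∀ u ∈ W, ℓ u ≤ c) ∧ c < ℓ v ∧ T = W.filter (fun u => ℓ u = c)) with h𝒮
  have h𝒮ne : 𝒮.Nonempty := by
    obtain ⟨w₁, hw₁, hwmax⟩ := Finset.exists_max_image W (fun u => f.toLinearMap u) hW
    refine ⟨W.filter (fun u => f.toLinearMap u = f.toLinearMap w₁), Finset.mem_filter.mpr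
      ⟨Finset.mem_powerset.mpr (Finset.filter_subset _ _), ?_⟩⟩
    refine ⟨f.toLinearMap, f.toLinearMap w₁, hwmax, ?_, rfl⟩
    have h1 : f w₁ < u₁ := hfW w₁ (subset_convexHull ℝ _ (Finset.mem_coe.mpr hw₁))
    exact lt_trans h1 hfv
  obtain ⟨T₀, hT₀mem, hT₀max⟩ := Finset.exists_max_image 𝒮 Finset.card h𝒮ne
  obtain ⟨hT₀pow, ℓ, c, hsupp, hltv, hT₀eq⟩ := Finset.mem_filter.mp hT₀mem
  have hT₀W : T₀ ⊆ W := Finset.mem_powerset.mp hT₀pow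
  refine ⟨ℓ, c, hsupp, hltv, ?_⟩
  rw [← hT₀eq]
  intro hBF
  rcases hBF with h0 | ⟨ℓ₁, c₁, h1, h2, h3, h4⟩
  · exact absurd h0 (Finset.insert_ne_empty v T₀)
  have hℓ₁ : ℓ₁ ≠ 0 := by
    intro h0
    subst h0
    obtain ⟨x, _, hx0⟩ := h2
    have hc₁ : c₁ = 0 := by simpa using hx0.symm
    apply h3
    ext y
    constructor
    · exact fun hy => hy.1
    · intro hy
      refine ⟨hy, ?_⟩
      simp [hc₁]
  set A := insert v T₀ with hA
  have hAv : v ∈ (A : Set E) := Finset.mem_coe.mpr (Finset.mem_insert_self v T₀)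
  have hAsub : (A : Set E) ⊆ {x : E | ℓ₁ x = c₁} := by
    intro x hx
    have hx2 : x ∈ {y ∈ (P.verts : Set E) | ℓ₁ y = c₁} := h4 ▸ hx
    exact hx2.2
  have hu₀ : ∃ u₀ ∈ W, u₀ ∉ affineSpan ℝ (A : Set E) := by
    by_contra h
    push_neg at h
    have hsub2 : (P.verts : Set E) ⊆ (affineSpan ℝ (A : Set E) : Set E) := by
      intro x hx
      by_cases hxv : x = v
      · subst hxv; exact subset_affineSpan ℝ _ hAv
      · exact h x (Finset.mem_erase.mpr ⟨hxv, Finset.mem_coe.mp hx⟩)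
    obtain ⟨H₁, hH₁⟩ := st14_hyperplane (d := d) ℓ₁ c₁
    have hspan1 : affineSpan ℝ (A : Set E) ≤ H₁ := affineSpan_le.mpr (by rw [hH₁]; exact hAsub)
    have htop : (affineSpan ℝ (P.verts : Set E)) ≤ affineSpan ℝ (A : Set E) :=
      affineSpan_le.mpr hsub2
    rw [P.span_top] at htop
    have hall : ∀ x : E, ℓ₁ x = c₁ := by
      intro x
      have hx : x ∈ affineSpan ℝ (A : Set E) := htop trivial
      have hx2 : x ∈ (H₁ : Set E) := hspan1 hx
      rw [hH₁] at hx2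
      exact hx2
    have h01 : (0:ℝ) = c₁ := by
      have := hall 0
      rwa [map_zero] at this
    apply hℓ₁
    ext y
    have hy := hall y
    rw [← h01] at hy
    simpa using hy
  obtain ⟨u₀, hu₀W, hu₀span⟩ := hu₀
  obtain ⟨φ, c₀, hφ, hφu₀⟩ := st14_vanishing (A : Set E) ⟨v, hAv⟩ hu₀span
  set D := W.filter (fun u => c₀ < φ u) with hD
  have hu₀D : u₀ ∈ D := Finset.mem_filter.mpr ⟨hu₀W, hφu₀⟩
  have hDnotT : ∀ u ∈ D, u ∉ T₀ ∧ ℓ u < c := by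
    intro u huD
    obtain ⟨huW, huφ⟩ := Finset.mem_filter.mp huD
    have hunotT : u ∉ T₀ := by
      intro h
      have hφu : φ u = c₀ := hφ u (Finset.mem_coe.mpr (Finset.mem_insert_of_mem h))
      linarith
    refine ⟨hunotT, ?_⟩
    have hle : ℓ u ≤ c := hsupp u huW
    have hne : ℓ u ≠ c := by
      intro he
      apply hunotT
      rw [hT₀eq]
      exact Finset.mem_filter.mpr ⟨huW, he⟩
    exact lt_of_le_of_ne hle hne
  obtain ⟨u₂, hu₂D, hu₂min⟩ := Finset.exists_min_image D (fun u => (c - ℓ u) / (φ u - c₀)) ⟨u₀, hu₀D⟩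
  have hu₂φ : 0 < φ u₂ - c₀ := by
    have := (Finset.mem_filter.mp hu₂D).2
    linarith
  set s := (c - ℓ u₂) / (φ u₂ - c₀) with hs
  have hspos : 0 < s := div_pos (by linarith [(hDnotT u₂ hu₂D).2]) hu₂φ
  have heval' : ∀ x : E, (ℓ + s • φ) x = ℓ x + s * φ x := by
    intro x
    simp [LinearMap.add_apply, LinearMap.smul_apply, smul_eq_mul]
  have hgood' : (∀ u ∈ W, (ℓ + s • φ) u ≤ c + s * c₀) ∧ c + s * c₀ < (ℓ + s • φ) v := by
    constructor
    · intro u huW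
      rw [heval' u]
      by_cases hu : c₀ < φ u
      · have huD' : u ∈ D := Finset.mem_filter.mpr ⟨huW, hu⟩
        have hmin := hu₂min u huD'
        have : s * (φ u - c₀) ≤ c - ℓ u := by
          rw [← le_div_iff₀ (by linarith : (0:ℝ) < φ u - c₀)]
          exact hmin
        nlinarith
      · have h1 : φ u - c₀ ≤ 0 := by linarith [le_of_not_gt hu]
        have h2 : s * (φ u - c₀) ≤ 0 := mul_nonpos_of_nonneg_of_nonpos (le_of_lt hspos) h1
        have h3 : ℓ u ≤ c := hsupp u huW
        nlinarith
    · rw [heval' v]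
      have hφv : φ v = c₀ := hφ v hAv
      rw [hφv]
      linarith
  set T' := W.filter (fun u => (ℓ + s • φ) u = c + s * c₀) with hT'
  have hT'mem : T' ∈ 𝒮 := by
    refine Finset.mem_filter.mpr ⟨Finset.mem_powerset.mpr (Finset.filter_subset _ _), ?_⟩
    exact ⟨ℓ + s • φ, c + s * c₀, hgood'.1, hgood'.2, rfl⟩
  have hT₀T' : T₀ ⊆ T' := by
    intro u hu
    have huW : u ∈ W := hT₀W hu
    have hℓu : ℓ u = c := by
      rw [hT₀eq] at hu
      exact (Finset.mem_filter.mp hu).2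
    have hφu : φ u = c₀ := hφ u (Finset.mem_coe.mpr (Finset.mem_insert_of_mem hu))
    refine Finset.mem_filter.mpr ⟨huW, ?_⟩
    rw [heval' u, hℓu, hφu]
  have hu₂T' : u₂ ∈ T' := by
    refine Finset.mem_filter.mpr ⟨(Finset.mem_filter.mp hu₂D).1, ?_⟩
    rw [heval' u₂]
    have : s * (φ u₂ - c₀) = c - ℓ u₂ := by
      rw [hs]
      field_simp
    nlinarith [this]
  have hssub : T₀ ⊂ T' :=
    (Finset.ssubset_iff_of_subset hT₀T').mpr ⟨u₂, hu₂T', (hDnotT u₂ hu₂D).1⟩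
  have hcard := Finset.card_lt_card hssub
  have := hT₀max T' hT'mem
  omega

theorem st14_main (k n : ℕ) (hk : 2 ≤ k) (hd : d = 2 * k ∨ d = 2 * k + 1)
    (P : SimplicialPolytope d) (hcard : P.verts.card = n) (hn : d + 2 ≤ n)
    (hngh : P.Neighborly k) :
    ∀ v ∈ P.verts, ∃ F : Finset E,
      P.IsLinkMissing v F ∧ k + 1 ≤ F.card := by
  intro v hv
  have hnk : k < P.verts.card := by rcases hd with h | h <;> omega
  have hW : (P.verts.erase v).Nonempty := by
    apply Finset.card_pos.mp
    rw [Finset.card_erase_of_mem hv]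
    rcases hd with h | h <;> omega
  obtain ⟨ℓ, c, hsupp, hltv, hnotface⟩ := st14_exists_visible P hv hW
  set W := P.verts.erase v with hWdef
  set T₀ := W.filter (fun u => ℓ u = c) with hT₀
  have hT₀W : T₀ ⊆ W := Finset.filter_subset _ _
  have hvW : v ∉ W := Finset.notMem_erase v P.verts
  set 𝒩 := T₀.powerset.filter (fun N => ¬ P.IsLinkFace v N) with h𝒩
  have h𝒩ne : 𝒩.Nonempty := by
    refine ⟨T₀, Finset.mem_filter.mpr ⟨Finset.mem_powerset.mpr (subset_refl T₀), ?_⟩⟩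
    intro hLF
    exact hnotface hLF.2
  obtain ⟨N, hNmem, hNmin⟩ := Finset.exists_minimal (s := 𝒩) h𝒩ne
  obtain ⟨hNpow, hNlk⟩ := Finset.mem_filter.mp hNmem
  have hNT₀ : N ⊆ T₀ := Finset.mem_powerset.mp hNpow
  have hNW : N ⊆ W := subset_trans hNT₀ hT₀W
  have hvN : v ∉ N := fun h => hvW (hNW h)
  refine ⟨N, ⟨hNW, hNlk, ?_⟩, ?_⟩
  · intro G hG
    by_contra hGlk
    have hGmem : G ∈ 𝒩 := Finset.mem_filter.mpr
      ⟨Finset.mem_powerset.mpr (subset_trans (subset_of_ssubset hG) hNT₀), hGlk⟩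
    exact absurd (hNmin hGmem (subset_of_ssubset hG)) (not_subset_of_ssubset hG)
  · by_contra hsmall
    push_neg at hsmall
    have hNk : N.card ≤ k := by omega
    apply hNlk
    refine ⟨hvN, ?_⟩
    set A := insert v N with hA
    have hAsubverts : A ⊆ P.verts := by
      intro x hx
      rcases Finset.mem_insert.mp hx with h | h
      · subst h; exact hv
      · exact Finset.mem_of_mem_erase (hNW h)
    have hvA : v ∈ A := Finset.mem_insert_self v N
    have hℓN : ∀ y ∈ N, ℓ y = c := by
      intro y hy
      exact (Finset.mem_filter.mp (hNT₀ hy)).2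
    -- Step 1: the affine span of A misses the hull of the other vertices
    have hdisjoint : Disjoint (affineSpan ℝ (A : Set E) : Set E)
        (convexHull ℝ ((P.verts \ A : Finset E) : Set E)) := by
      rw [Set.disjoint_left]
      intro x hxA hxB
      obtain ⟨w, hw1, hw2⟩ := st14_affmem A hxA
      obtain ⟨b, hb0, hb1, hb2⟩ := st14_convmem (P.verts \ A) hxB
      rw [hA, Finset.sum_insert hvN] at hw1 hw2
      have hB_W : ∀ y ∈ P.verts \ A, y ∈ W := by
        intro y hy
        obtain ⟨hyV, hyA⟩ := Finset.mem_sdiff.mp hy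
        refine Finset.mem_erase.mpr ⟨?_, hyV⟩
        intro he; rw [he] at hyA; exact hyA hvA
      -- evaluate ℓ at x two ways
      have hx1 : ℓ x = w v * ℓ v + (1 - w v) * c := by
        rw [← hw2, map_add, map_smul, map_sum, smul_eq_mul]
        have hterm : ∀ y ∈ N, ℓ (w y • y) = w y * c := by
          intro y hy
          rw [map_smul, smul_eq_mul, hℓN y hy]
        rw [Finset.sum_congr rfl hterm, ← Finset.sum_mul]
        have : ∑ y ∈ N, w y = 1 - w v := by linarith
        rw [this]
      have hx2 : ℓ x ≤ c := by
        rw [← hb2, map_sum]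
        have hterm : ∀ y ∈ P.verts \ A, ℓ (b y • y) ≤ b y * c := by
          intro y hy
          rw [map_smul, smul_eq_mul]
          exact mul_le_mul_of_nonneg_left (hsupp y (hB_W y hy)) (hb0 y hy)
        calc ∑ y ∈ P.verts \ A, ℓ (b y • y) ≤ ∑ y ∈ P.verts \ A, b y * c :=
              Finset.sum_le_sum hterm
          _ = (∑ y ∈ P.verts \ A, b y) * c := (Finset.sum_mul _ _ _).symm
          _ = c := by rw [hb1, one_mul]
      have hαnonpos : w v ≤ 0 := by nlinarith
      -- contradiction via split_cross
      have hvnotB : v ∉ P.verts \ A := by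
        intro h
        exact (Finset.mem_sdiff.mp h).2 hvA
      refine st14_split_cross P k hngh hnk N (insert v (P.verts \ A))
        (fun y hy => hAsubverts (Finset.mem_insert_of_mem hy))
        ?_ ?_ hNk w (fun y => if y = v then -(w v) else b y) ?_ ?_ ?_ ?_
      · intro y hy
        rcases Finset.mem_insert.mp hy with h | h
        · rw [h]; exact hv
        · exact (Finset.mem_sdiff.mp h).1
      · rw [Finset.disjoint_left]
        intro y hyN hyΓ
        rcases Finset.mem_insert.mp hyΓ with h | h
        · rw [h] at hyN; exact hvN hyN
        · exact (Finset.mem_sdiff.mp h).2 (Finset.mem_insert_of_mem hyN)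
      · intro g hg
        beta_reduce
        rcases Finset.mem_insert.mp hg with h | h
        · rw [if_pos h]; linarith
        · have hgv : g ≠ v := by
            intro he; rw [he] at h; exact hvnotB h
          rw [if_neg hgv]; exact hb0 g h
      · beta_reduce
        rw [Finset.sum_insert hvnotB, if_pos rfl]
        have hcong : ∀ y ∈ P.verts \ A, (if y = v then -(w v) else b y) = b y := by
          intro y hy
          have hgv : y ≠ v := by
            intro he; rw [he] at hy; exact hvnotB hy
          rw [if_neg hgv]
        rw [Finset.sum_congr rfl hcong, hb1]
        linarith
      · have : ∑ y ∈ N, w y = 1 - w v := by linarith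
        rw [this]; linarith
      · beta_reduce
        rw [Finset.sum_insert hvnotB, if_pos rfl]
        have hcong : ∀ y ∈ P.verts \ A, (if y = v then -(w v) else b y) • y = b y • y := by
          intro y hy
          have hgv : y ≠ v := by
            intro he; rw [he] at hy; exact hvnotB hy
          rw [if_neg hgv]
        rw [Finset.sum_congr rfl hcong, hb2]
        have : x = w v • v + ∑ y ∈ N, w y • y := hw2.symm
        rw [this]
        module
    -- Step 2: separate and build the supporting functional
    have hclosedA : IsClosed (affineSpan ℝ (A : Set E) : Set E) :=
      (affineSpan ℝ (A : Set E)).closed_of_finiteDimensional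
    have hconvA : Convex ℝ (affineSpan ℝ (A : Set E) : Set E) :=
      (affineSpan ℝ (A : Set E)).convex
    have hconvB : Convex ℝ (convexHull ℝ ((P.verts \ A : Finset E) : Set E)) :=
      convex_convexHull ℝ _
    have hcompB : IsCompact (convexHull ℝ ((P.verts \ A : Finset E) : Set E)) :=
      ((P.verts \ A).finite_toSet).isCompact_convexHull ℝ
    obtain ⟨g, r, r', hgA, hrr', hgB⟩ :=
      geometric_hahn_banach_closed_compact hconvA hclosedA hconvB hcompB hdisjoint
    have hvspan : v ∈ affineSpan ℝ (A : Set E) :=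
      subset_affineSpan ℝ _ (Finset.mem_coe.mpr hvA)
    have hgconst : ∀ p ∈ affineSpan ℝ (A : Set E), g p = g v := by
      intro p hp
      by_contra hne
      have hden : g p - g v ≠ 0 := sub_ne_zero.mpr (fun h => hne h)
      have hline : ∀ t : ℝ, t • (p -ᵥ v) +ᵥ v ∈ affineSpan ℝ (A : Set E) :=
        fun t => AffineSubspace.smul_vsub_vadd_mem _ t hp hvspan hvspan
      have heval : ∀ t : ℝ, g (t • (p -ᵥ v) +ᵥ v) = t * (g p - g v) + g v := by
        intro t
        have h0 : t • (p -ᵥ v) +ᵥ v = t • (p - v) + v := rfl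
        rw [h0, map_add, map_smul, map_sub, smul_eq_mul]
      have ht := hgA _ (hline ((r - g v) / (g p - g v)))
      rw [heval, div_mul_cancel₀ _ hden] at ht
      linarith
    have hgvr : g v < r := hgA v hvspan
    -- the supporting functional
    have hproper : ∃ u ∈ P.verts, u ∉ A := by
      have hcardA : A.card ≤ k + 1 := by
        calc A.card ≤ N.card + 1 := Finset.card_insert_le v N
          _ ≤ k + 1 := by omega
      have : ¬ P.verts ⊆ A := by
        intro hsub
        have := Finset.card_le_card hsub
        rcases hd with h | h <;> omega
      obtain ⟨u, hu⟩ := Finset.sdiff_nonempty.mpr this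
      exact ⟨u, (Finset.mem_sdiff.mp hu).1, (Finset.mem_sdiff.mp hu).2⟩
    refine st14_isBdryFace_of_cert P A hAsubverts hproper ⟨v, hvA⟩
      (-(g.toLinearMap)) (-(g v)) ?_ ?_ ?_
    · intro u hu
      by_cases h : u ∈ A
      · have : g u = g v := hgconst u (subset_affineSpan ℝ _ (Finset.mem_coe.mpr h))
        simp [this]
      · have hmem : u ∈ convexHull ℝ ((P.verts \ A : Finset E) : Set E) :=
          subset_convexHull ℝ _ (Finset.mem_coe.mpr (Finset.mem_sdiff.mpr ⟨hu, h⟩))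
        have := hgB u hmem
        simp only [LinearMap.neg_apply, ContinuousLinearMap.coe_coe]
        have : -(g u) < -(g v) := by linarith
        linarith [this]
    · intro u hu
      have : g u = g v := hgconst u (subset_affineSpan ℝ _ (Finset.mem_coe.mpr hu))
      simp [this]
    · intro u hu hunotA
      have hmem : u ∈ convexHull ℝ ((P.verts \ A : Finset E) : Set E) :=
        subset_convexHull ℝ _ (Finset.mem_coe.mpr (Finset.mem_sdiff.mpr ⟨hu, hunotA⟩))
      have := hgB u hmem
      simp only [LinearMap.neg_apply, ContinuousLinearMap.coe_coe]
      linarith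

end AuxStatement14


/-- Let `k ≥ 2`, `d ∈ {2k, 2k+1}`, and let `P` be a neighborly
(`k`-neighborly) simplicial `d`-polytope with `n ≥ d + 2` vertices. Then for every vertex `v`
of `P`, the link of `v` in `∂P` has a missing face of cardinality at least `k + 1`. -/
theorem statement14 (k d n : ℕ) (hk : 2 ≤ k) (hd : d = 2 * k ∨ d = 2 * k + 1)
    (P : SimplicialPolytope d) (hcard : P.verts.card = n) (hn : d + 2 ≤ n)
    (hngh : P.Neighborly k) :
    ∀ v ∈ P.verts, ∃ F : Finset (EuclideanSpace ℝ (Fin d)),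
      P.IsLinkMissing v F ∧ k + 1 ≤ F.card := by
  intro v hv
  exact st14_main k n hk hd P hcard hn hngh v hv
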